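/- The Yukawa couplings of V_{(2,29)} are determined by K^{3,0}: let z1, z2, K30, K21, K12, K03 be complex numbers with z1 ≠ 0 and z1 + z2 ≠ 2, satisfying the three linear relations (1+z1)K30 + 3z1·K21 + 3z1·K12 + z1·K03 = 0, (z1+z2+1)K30 + (2z1+2z2−1)K21 + (z1+z2+1)K12 = 0, and (z1+z2+1)K21 + (2z1+2z2−1)K12 + (z1+z2+1)K03 = 0. Then 3z1(z1+z2−2)·K21 = (−2z1² − z1z2 − z1 + z2² + 2z2 + 1)·K30, 3z1(z1+z2−2)·K12 = (z1² − z1z2 − 2z2² + 2z1 − z2 + 1)·K30, and z1·K03 = z2·K30. -/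
import Mathlib

/-- The Yukawa couplings of `V_{(2,29)}` are determined by `K^{3,0}` via the
linear relations coming from the Picard-Fuchs operators and Griffiths transversality. -/
theorem V229_Yukawa_couplings (z1 z2 K30 K21 K12 K03 : ℂ)
    (hz1 : z1 ≠ 0) (hz : z1 + z2 ≠ 2)
    (e1 : (1 + z1) * K30 + 3 * z1 * K21 + 3 * z1 * K12 + z1 * K03 = 0)
    (e2 : (z1 + z2 + 1) * K30 + (2*z1 + 2*z2 - 1) * K21 + (z1 + z2 + 1) * K12 = 0)
    (e3 : (z1 + z2 + 1) * K21 + (2*z1 + 2*z2 - 1) * K12 + (z1 + z2 + 1) * K03 = 0) :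
    3 * z1 * (z1 + z2 - 2) * K21
        = (-2*z1^2 - z1*z2 - z1 + z2^2 + 2*z2 + 1) * K30 ∧
    3 * z1 * (z1 + z2 - 2) * K12
        = (z1^2 - z1*z2 - 2*z2^2 + 2*z1 - z2 + 1) * K30 ∧
    z1 * K03 = z2 * K30 := by
  refine ⟨?_, ?_, ?_⟩
  · linear_combination (-(z1 + z2 + 1)^2) * e1 + z1 * (z1 + z2 + 4) * e2
      + z1 * (z1 + z2 + 1) * e3
  · linear_combination ((z1 + z2 + 1) * (2*z1 + 2*z2 - 1)) * e1
      + (-2 * z1 * (z1 + z2 + 1)) * e2 + (-z1 * (2*z1 + 2*z2 - 1)) * e3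
  · linear_combination (-(z1 + z2)) * e1 + z1 * e2 + z1 * e3
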